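/- Let s ≥ 1 and let Q be an m×n binary matrix with property P_s. Let C be an m×t binary matrix such that E := C·Cᵀ − 2^s·I_m is a binary matrix. Then the block matrix Q' = [[Q, C, E], [0, I_t, Cᵀ]] of size (m+t) × (n+t+m) is uniquely identifying (UI). -/

import Mathlib

/-- If `Q` is an `m×n` binary matrix with property `P_s` and `C` is an
`m×t` binary matrix with `E := C·Cᵀ − 2^s·I_m` binary, then the block matrix
`Q' = [[Q, C, E], [0, I_t, Cᵀ]]` is uniquely identifying. -/
theorem stmt8 (s m n t : ℕ) (hs : 1 ≤ s)
    (Q : Matrix (Fin m) (Fin n) ℤ)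
    (hQbin : ∀ i j, Q i j = 0 ∨ Q i j = 1)
    (hPs : ∀ z : Fin n → ℤ, (∀ j, z j = -1 ∨ z j = 0 ∨ z j = 1) → z ≠ 0 →
      ∃ i, ¬ ((2 ^ s : ℤ) ∣ Q.mulVec z i))
    (C : Matrix (Fin m) (Fin t) ℤ)
    (hCbin : ∀ i j, C i j = 0 ∨ C i j = 1)
    (E : Matrix (Fin m) (Fin m) ℤ)
    (hE : E = C * C.transpose - 2 ^ s)
    (hEbin : ∀ i j, E i j = 0 ∨ E i j = 1)
    (Q' : Matrix (Fin m ⊕ Fin t) (Fin n ⊕ (Fin t ⊕ Fin m)) ℤ)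
    (hQ' : Q' = Matrix.fromBlocks Q (Matrix.fromCols C E) 0
      (Matrix.fromCols 1 C.transpose)) :
    ∀ z : Fin n ⊕ (Fin t ⊕ Fin m) → ℤ, (∀ j, z j = -1 ∨ z j = 0 ∨ z j = 1) →
      Q'.mulVec z = 0 → z = 0 := by
  intro z hz hzero
  set x : Fin n → ℤ := fun j => z (Sum.inl j) with hx
  set y : Fin t → ℤ := fun j => z (Sum.inr (Sum.inl j)) with hy
  set w : Fin m → ℤ := fun j => z (Sum.inr (Sum.inr j)) with hw
  have hzeq : z = Sum.elim x (Sum.elim y w) := by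
    funext j
    rcases j with j | j
    · rfl
    · rcases j with j | j <;> rfl
  rw [hzeq, hQ', Matrix.fromBlocks_mulVec] at hzero
  simp only [Sum.elim_comp_inl, Sum.elim_comp_inr] at hzero
  rw [Matrix.fromCols_mulVec_sumElim, Matrix.fromCols_mulVec_sumElim] at hzero
  have h1 : Q.mulVec x + (C.mulVec y + E.mulVec w) = 0 := by
    have := congrFun hzero
    funext i; simpa using congrFun hzero (Sum.inl i)
  have h2 : y + C.transpose.mulVec w = 0 := by
    funext i
    have := congrFun hzero (Sum.inr i)
    simpa [Matrix.one_mulVec] using this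
  have hyw : y = -(C.transpose.mulVec w) := by
    funext i
    have := congrFun h2 i
    simp only [Pi.add_apply, Pi.neg_apply, Pi.zero_apply] at this ⊢
    linarith
  have hpow : (2 : Matrix (Fin m) (Fin m) ℤ) ^ s = (2 ^ s : ℤ) • 1 := by
    rw [show (2 : Matrix (Fin m) (Fin m) ℤ) = (2 : ℤ) • 1 by simp, smul_pow, one_pow]
  have hQx : Q.mulVec x = (2 ^ s : ℤ) • w := by
    have hEv : E.mulVec w = C.mulVec (C.transpose.mulVec w) - (2 ^ s : ℤ) • w := by
      rw [hE, hpow, Matrix.sub_mulVec, Matrix.mulVec_mulVec,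
        Matrix.smul_mulVec, Matrix.one_mulVec]
    have hCy : C.mulVec y = -(C.mulVec (C.transpose.mulVec w)) := by
      rw [hyw, Matrix.mulVec_neg]
    rw [hEv, hCy] at h1
    funext i
    have := congrFun h1 i
    simp [Pi.add_apply, Pi.sub_apply] at this ⊢
    linarith
  have hx0 : x = 0 := by
    by_contra hne
    obtain ⟨i, hi⟩ := hPs x (fun j => hz (Sum.inl j)) hne
    exact hi ⟨w i, by rw [hQx]; simp⟩
  have hw0 : w = 0 := by
    rw [hx0, Matrix.mulVec_zero] at hQx
    funext i
    have h := congrFun hQx i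
    simp only [Pi.zero_apply, Pi.smul_apply, smul_eq_mul] at h
    have h2s : (2 : ℤ) ^ s ≠ 0 := by positivity
    rcases mul_eq_zero.mp h.symm with h' | h'
    · exact absurd h' h2s
    · exact h'
  have hy0 : y = 0 := by
    rw [hyw, hw0, Matrix.mulVec_zero, neg_zero]
  rw [hzeq, hx0, hy0, hw0]
  funext j
  rcases j with j | j
  · rfl
  · rcases j with j | j <;> rfl
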